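/- Suppose (A1)–(A3): $T$ is a CEMPT on an infinite $\sigma$-finite space, $0<\mu(Y)<\infty$, $w_n^Y\sim n^{1-\alpha}\ell(n)$ with $\alpha\in(0,1)$ and $\ell$ slowly varying at $\infty$, and $\{(w_n^Y)^{-1}\sum_{k=0}^{n-1}\hat T^k1_{Y_k}\}_{n\ge N}$ is uniformly sweeping for $1_Y$ for some $N$. Let $G\in L^1(\mu)$, $G\ge0$, and assume $1_Y$ is uniformly sweeping for $G$. Then there exists $C_2<\infty$ such that for every positive sequence $c(n)$ with $c(n)\to0$, $nc(n)\to\infty$: $\limsup_{n\to\infty}\frac{\ell(c(n)n)}{c(n)^\alpha\ell(n)}\,\mu_G(Z_n^Y/n\le c(n))\le C_2$. -/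

import Mathlib

open MeasureTheory Filter Real Set
open scoped Topology ENNReal

/-- First return time to `Y` (value `⊤` if the orbit never returns). -/
noncomputable def firstReturn {X : Type*} (T : X → X) (Y : Set X) (x : X) : ℕ∞ :=
  ⨅ (k : ℕ) (_ : 1 ≤ k ∧ T^[k] x ∈ Y), (k : ℕ∞)

/-- The sets `Y₀ = Y`, `Yₙ = Yᶜ ∩ {φ = n}`. -/
noncomputable def Ypart {X : Type*} (T : X → X) (Y : Set X) : ℕ → Set X
  | 0 => Y
  | (n+1) => Yᶜ ∩ {x | firstReturn T Y x = ((n+1 : ℕ) : ℕ∞)}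

/-- The wandering rate `w_n^Y`. -/
noncomputable def wrate {X : Type*} [MeasurableSpace X] (T : X → X) (Y : Set X)
    (μ : Measure X) (n : ℕ) : ℝ≥0∞ :=
  ∑ k ∈ Finset.range n, μ (Y ∩ {x | (k : ℕ∞) < firstReturn T Y x})

/-- The normalized entrance densities `(w_n^Y)⁻¹ ∑_{k<n} T̂^k 1_{Y_k}`. -/
noncomputable def entrance {X : Type*} [MeasurableSpace X] (T : X → X) (Y : Set X)
    (μ : Measure X) (hatT : (X → ℝ≥0∞) → (X → ℝ≥0∞)) (n : ℕ) (x : X) : ℝ≥0∞ :=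
  (∑ k ∈ Finset.range n, (hatT^[k] ((Ypart T Y k).indicator fun _ => (1:ℝ≥0∞))) x) /
    wrate T Y μ n

/-- Last visit time to `Y` up to time `n` (with `max ∅ = 0`). -/
noncomputable def lastVisit {X : Type*} (T : X → X) (Y : Set X) (n : ℕ) (x : X) : ℕ :=
  sSup {k | k ≤ n ∧ T^[k] x ∈ Y}

lemma firstReturn_lt_iff {X : Type*} (T : X → X) (Y : Set X) (a : ℕ) (x : X) :
    ((a : ℕ∞) < firstReturn T Y x) ↔ ∀ k, 1 ≤ k → k ≤ a → T^[k] x ∉ Y := by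
  constructor
  · intro h k h1 hk hY
    have hle : firstReturn T Y x ≤ (k : ℕ∞) := iInf_le_of_le k (iInf_le _ ⟨h1, hY⟩)
    have : (a : ℕ∞) < (a : ℕ∞) := h.trans_le (hle.trans (by exact_mod_cast hk))
    exact lt_irrefl _ this
  · intro H
    have h1 : ((a : ℕ∞) + 1) ≤ firstReturn T Y x := by
      refine le_iInf fun k => le_iInf fun hk => ?_
      have hak : a < k := lt_of_not_ge fun h => H k hk.1 h hk.2
      have : ((a + 1 : ℕ) : ℕ∞) ≤ (k : ℕ∞) := by exact_mod_cast Nat.succ_le_of_lt hak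
      simpa using this
    exact (ENat.add_one_le_iff (by simp)).mp h1

lemma firstReturn_pos {X : Type*} (T : X → X) (Y : Set X) (x : X) :
    (0 : ℕ∞) < firstReturn T Y x := by
  have := (firstReturn_lt_iff T Y 0 x).mpr (by omega)
  simpa using this

lemma measurableSet_firstReturn_gt {X : Type*} [MeasurableSpace X] {T : X → X}
    (hT : Measurable T) {Y : Set X} (hYm : MeasurableSet Y) (a : ℕ) :
    MeasurableSet {x | (a : ℕ∞) < firstReturn T Y x} := by
  have : {x | (a : ℕ∞) < firstReturn T Y x}
      = ⋂ k ∈ Finset.Icc 1 a, (T^[k]) ⁻¹' Yᶜ := by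
    ext x
    simp only [Set.mem_setOf_eq, firstReturn_lt_iff, Set.mem_iInter, Finset.mem_Icc,
      Set.mem_preimage, Set.mem_compl_iff]
    exact ⟨fun h k hk => h k hk.1 hk.2, fun h k h1 h2 => h k ⟨h1, h2⟩⟩
  rw [this]
  exact Finset.measurableSet_biInter _ fun k _ => (hT.iterate k) hYm.compl

lemma firstReturn_eq_iff {X : Type*} (T : X → X) (Y : Set X) (a : ℕ) (x : X) :
    firstReturn T Y x = ((a+1 : ℕ) : ℕ∞) ↔
      ((a : ℕ∞) < firstReturn T Y x ∧ ¬ (((a+1:ℕ) : ℕ∞) < firstReturn T Y x)) := by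
  constructor
  · intro h
    constructor
    · rw [h]; exact_mod_cast Nat.lt_succ_self a
    · rw [h]; exact lt_irrefl _
  · rintro ⟨h1, h2⟩
    have hle : firstReturn T Y x ≤ ((a+1:ℕ) : ℕ∞) := not_lt.mp h2
    have hge : ((a+1:ℕ) : ℕ∞) ≤ firstReturn T Y x := by
      have := (ENat.add_one_le_iff (show ((a:ℕ):ℕ∞) ≠ ⊤ by simp)).mpr h1
      simpa using this
    exact le_antisymm hle hge

lemma measurableSet_Ypart {X : Type*} [MeasurableSpace X] {T : X → X}
    (hT : Measurable T) {Y : Set X} (hYm : MeasurableSet Y) (k : ℕ) :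
    MeasurableSet (Ypart T Y k) := by
  cases k with
  | zero => exact hYm
  | succ a =>
    have : {x | firstReturn T Y x = ((a+1 : ℕ) : ℕ∞)}
        = {x | (a : ℕ∞) < firstReturn T Y x} \ {x | ((a+1:ℕ) : ℕ∞) < firstReturn T Y x} := by
      ext x
      simp only [Set.mem_setOf_eq, Set.mem_diff]
      rw [firstReturn_eq_iff]
    exact hYm.compl.inter (by
      rw [this]
      exact (measurableSet_firstReturn_gt hT hYm a).diff
        (measurableSet_firstReturn_gt hT hYm (a+1)))

lemma Ypart_disjoint {X : Type*} (T : X → X) (Y : Set X) {k k' : ℕ} (h : k ≠ k') :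
    Disjoint (Ypart T Y k) (Ypart T Y k') := by
  rw [Set.disjoint_left]
  intro x hx hx'
  match k, k' with
  | 0, 0 => exact h rfl
  | 0, (b+1) => exact hx'.1 hx
  | (a+1), 0 => exact hx.1 hx'
  | (a+1), (b+1) =>
    have : ((a+1:ℕ) : ℕ∞) = ((b+1:ℕ) : ℕ∞) := hx.2.symm.trans hx'.2
    exact h (by exact_mod_cast this)

lemma lastVisit_le_iff {X : Type*} (T : X → X) (Y : Set X) (n M : ℕ) (x : X) :
    lastVisit T Y n x ≤ M ↔ ∀ k, M < k → k ≤ n → T^[k] x ∉ Y := by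
  have hbdd : BddAbove {k | k ≤ n ∧ T^[k] x ∈ Y} := ⟨n, fun k hk => hk.1⟩
  constructor
  · intro h k hM hk hY
    have : k ≤ lastVisit T Y n x := le_csSup hbdd ⟨hk, hY⟩
    omega
  · intro H
    rcases Set.eq_empty_or_nonempty {k | k ≤ n ∧ T^[k] x ∈ Y} with he | hne
    · simp [lastVisit, he]
    · exact csSup_le hne fun b hb => by
        by_contra hbM
        exact H b (by omega) hb.1 hb.2

lemma lastVisit_set_eq {X : Type*} (T : X → X) (Y : Set X) (n : ℕ) (r : ℝ) (hr : 0 ≤ r) :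
    {x | (lastVisit T Y n x : ℝ) ≤ r}
      = ⋂ k ∈ Finset.Ioc (⌊r⌋₊) n, (T^[k]) ⁻¹' Yᶜ := by
  ext x
  simp only [Set.mem_setOf_eq, Set.mem_iInter, Finset.mem_Ioc, Set.mem_preimage,
    Set.mem_compl_iff]
  rw [show ((lastVisit T Y n x : ℝ) ≤ r ↔ lastVisit T Y n x ≤ ⌊r⌋₊) from
    (Nat.le_floor_iff hr).symm, lastVisit_le_iff]
  exact ⟨fun h k hk => h k hk.1 hk.2, fun h k h1 h2 => h k ⟨h1, h2⟩⟩

lemma measurableSet_lastVisit_le {X : Type*} [MeasurableSpace X] {T : X → X}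
    (hT : Measurable T) {Y : Set X} (hYm : MeasurableSet Y) (n : ℕ) (r : ℝ) (hr : 0 ≤ r) :
    MeasurableSet {x | (lastVisit T Y n x : ℝ) ≤ r} := by
  rw [lastVisit_set_eq T Y n r hr]
  exact Finset.measurableSet_biInter _ fun k _ => (hT.iterate k) hYm.compl

lemma hatT_iterate_measurable {X : Type*} [MeasurableSpace X]
    (hatT : (X → ℝ≥0∞) → (X → ℝ≥0∞)) (hatTmeas : ∀ u, Measurable u → Measurable (hatT u))
    {u : X → ℝ≥0∞} (hu : Measurable u) (k : ℕ) : Measurable (hatT^[k] u) := by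
  induction k generalizing u with
  | zero => exact hu
  | succ k ih =>
    rw [Function.iterate_succ_apply]
    exact ih (hatTmeas u hu)

lemma dual_iterate {X : Type*} [MeasurableSpace X] {μ : Measure X} {T : X → X}
    (hT : Measurable T)
    (hatT : (X → ℝ≥0∞) → (X → ℝ≥0∞))
    (hatTmeas : ∀ u, Measurable u → Measurable (hatT u))
    (hatTdual : ∀ u v : X → ℝ≥0∞, Measurable u → Measurable v →
      ∫⁻ x, v (T x) * u x ∂μ = ∫⁻ x, v x * hatT u x ∂μ)
    (k : ℕ) {u v : X → ℝ≥0∞} (hu : Measurable u) (hv : Measurable v) :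
    ∫⁻ x, v (T^[k] x) * u x ∂μ = ∫⁻ x, v x * (hatT^[k] u) x ∂μ := by
  induction k generalizing u with
  | zero => simp
  | succ k ih =>
    have h1 : ∫⁻ x, v (T^[k+1] x) * u x ∂μ = ∫⁻ x, (fun y => v (T^[k] y)) (T x) * u x ∂μ := by
      apply lintegral_congr fun x => ?_
      rw [Function.iterate_succ_apply]
    rw [h1, hatTdual u (fun y => v (T^[k] y)) hu (hv.comp (hT.iterate k)),
      show (∫⁻ x, v (T^[k] x) * hatT u x ∂μ) = ∫⁻ x, v x * (hatT^[k] (hatT u)) x ∂μ from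
        ih (hatTmeas u hu)]
    apply lintegral_congr fun x => ?_
    rw [Function.iterate_succ_apply]

lemma lintegral_indicator_one_mul {X : Type*} [MeasurableSpace X] {μ : Measure X}
    {A : Set X} (hA : MeasurableSet A) (u : X → ℝ≥0∞) :
    ∫⁻ x, A.indicator (fun _ => (1:ℝ≥0∞)) x * u x ∂μ = ∫⁻ x in A, u x ∂μ := by
  rw [← lintegral_indicator hA]
  apply lintegral_congr fun x => ?_
  by_cases hx : x ∈ A <;> simp [Set.indicator, hx]

lemma lintegral_set_dual {X : Type*} [MeasurableSpace X] {μ : Measure X} {T : X → X}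
    (hT : Measurable T)
    (hatT : (X → ℝ≥0∞) → (X → ℝ≥0∞))
    (hatTmeas : ∀ u, Measurable u → Measurable (hatT u))
    (hatTdual : ∀ u v : X → ℝ≥0∞, Measurable u → Measurable v →
      ∫⁻ x, v (T x) * u x ∂μ = ∫⁻ x, v x * hatT u x ∂μ)
    (k : ℕ) {u : X → ℝ≥0∞} (hu : Measurable u) {A : Set X} (hA : MeasurableSet A) :
    ∫⁻ x in A, (hatT^[k] u) x ∂μ = ∫⁻ x, A.indicator (fun _ => (1:ℝ≥0∞)) (T^[k] x) * u x ∂μ := by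
  have hv : Measurable (A.indicator (fun _ => (1:ℝ≥0∞))) := measurable_const.indicator hA
  have h := dual_iterate hT hatT hatTmeas hatTdual k hu hv
  rw [← lintegral_indicator_one_mul hA (hatT^[k] u), ← h]

lemma lintegral_ind_comp_ind {X : Type*} [MeasurableSpace X] {μ : Measure X} {T : X → X}
    (hT : Measurable T) (k : ℕ) {A B : Set X} (hA : MeasurableSet A) (hB : MeasurableSet B) :
    ∫⁻ x, A.indicator (fun _ => (1:ℝ≥0∞)) (T^[k] x) * B.indicator (fun _ => (1:ℝ≥0∞)) x ∂μ
      = μ (B ∩ (T^[k]) ⁻¹' A) := by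
  have : ∀ x, A.indicator (fun _ => (1:ℝ≥0∞)) (T^[k] x) * B.indicator (fun _ => (1:ℝ≥0∞)) x
      = (B ∩ (T^[k]) ⁻¹' A).indicator (fun _ => (1:ℝ≥0∞)) x := by
    intro x
    by_cases h1 : T^[k] x ∈ A <;> by_cases h2 : x ∈ B <;>
      simp [Set.indicator, h1, h2, Set.mem_preimage]
  rw [lintegral_congr this, lintegral_indicator_const
    (hB.inter ((hT.iterate k) hA))]
  exact one_mul _

lemma measurable_entrance {X : Type*} [MeasurableSpace X] {T : X → X} (hT : Measurable T)
    {Y : Set X} (hYm : MeasurableSet Y) (μ : Measure X)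
    (hatT : (X → ℝ≥0∞) → (X → ℝ≥0∞)) (hatTmeas : ∀ u, Measurable u → Measurable (hatT u))
    (m : ℕ) :
    Measurable (fun x => (∑ k ∈ Finset.range m,
      (hatT^[k] ((Ypart T Y k).indicator fun _ => (1:ℝ≥0∞))) x) / wrate T Y μ m) := by
  apply Measurable.div _ measurable_const
  exact Finset.measurable_sum _ fun k _ => hatT_iterate_measurable hatT hatTmeas
    (measurable_const.indicator (measurableSet_Ypart hT hYm k)) k

lemma sweep_G_bound {X : Type*} [MeasurableSpace X] {μ : Measure X} {T : X → X}
    (hT : Measurable T) {Y : Set X} (hYm : MeasurableSet Y)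
    (hatT : (X → ℝ≥0∞) → (X → ℝ≥0∞))
    (hatTmeas : ∀ u, Measurable u → Measurable (hatT u))
    (hatTdual : ∀ u v : X → ℝ≥0∞, Measurable u → Measurable v →
      ∫⁻ x, v (T x) * u x ∂μ = ∫⁻ x, v x * hatT u x ∂μ)
    {G : X → ℝ≥0∞} {CG : ℝ≥0∞} {K' : ℕ}
    (hsweep : ∀ᵐ x ∂μ, G x ≤ CG * ∑ j ∈ Finset.range (K' + 1),
      (hatT^[j] (Y.indicator fun _ => (1:ℝ≥0∞))) x)
    {A : Set X} (hA : MeasurableSet A) :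
    ∫⁻ x in A, G x ∂μ ≤ CG * ∑ j ∈ Finset.range (K' + 1), μ (Y ∩ (T^[j]) ⁻¹' A) := by
  have hmeas : ∀ j : ℕ, Measurable (hatT^[j] (Y.indicator fun _ => (1:ℝ≥0∞))) :=
    fun j => hatT_iterate_measurable hatT hatTmeas (measurable_const.indicator hYm) j
  calc ∫⁻ x in A, G x ∂μ
      ≤ ∫⁻ x in A, (CG * ∑ j ∈ Finset.range (K' + 1),
          (hatT^[j] (Y.indicator fun _ => (1:ℝ≥0∞))) x) ∂μ :=
        lintegral_mono_ae (ae_restrict_of_ae hsweep)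
    _ = CG * ∑ j ∈ Finset.range (K' + 1),
          ∫⁻ x in A, (hatT^[j] (Y.indicator fun _ => (1:ℝ≥0∞))) x ∂μ := by
        rw [lintegral_const_mul _ (Finset.measurable_sum _ fun j _ => hmeas j),
          lintegral_finset_sum _ fun j _ => hmeas j]
    _ = CG * ∑ j ∈ Finset.range (K' + 1), μ (Y ∩ (T^[j]) ⁻¹' A) := by
        congr 1
        apply Finset.sum_congr rfl fun j _ => ?_
        rw [lintegral_set_dual hT hatT hatTmeas hatTdual j
          (measurable_const.indicator hYm) hA,
          lintegral_ind_comp_ind hT j hA hYm]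

lemma A3_perD {X : Type*} [MeasurableSpace X] {μ : Measure X} {T : X → X}
    (hT : Measurable T) {Y : Set X} (hYm : MeasurableSet Y)
    (hatT : (X → ℝ≥0∞) → (X → ℝ≥0∞))
    (hatTmeas : ∀ u, Measurable u → Measurable (hatT u))
    (hatTdual : ∀ u v : X → ℝ≥0∞, Measurable u → Measurable v →
      ∫⁻ x, v (T x) * u x ∂μ = ∫⁻ x, v x * hatT u x ∂μ)
    {C : ℝ≥0∞} {K m : ℕ}
    (hA3 : ∀ᵐ x ∂μ.restrict Y,
      1 ≤ C * ∑ j ∈ Finset.range (K + 1), (hatT^[j] (entrance T Y μ hatT m)) x)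
    {D : Set X} (hD : MeasurableSet D) (hDY : D ⊆ Y) :
    μ D ≤ C * (∑ j ∈ Finset.range (K + 1), ∑ k ∈ Finset.range m,
      μ (Ypart T Y k ∩ (T^[j + k]) ⁻¹' D)) * (wrate T Y μ m)⁻¹ := by
  have hem : Measurable (entrance T Y μ hatT m) := by
    have := measurable_entrance hT hYm μ hatT hatTmeas m
    exact this
  have hYkmeas : ∀ k : ℕ, Measurable ((Ypart T Y k).indicator fun _ => (1:ℝ≥0∞)) :=
    fun k => measurable_const.indicator (measurableSet_Ypart hT hYm k)
  have hmeasj : ∀ j : ℕ, Measurable (hatT^[j] (entrance T Y μ hatT m)) :=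
    fun j => hatT_iterate_measurable hatT hatTmeas hem j
  -- step 1 : μ D ≤ ∫ over D of the A3 bound
  have step1 : μ D ≤ C * ∑ j ∈ Finset.range (K + 1),
      ∫⁻ x in D, (hatT^[j] (entrance T Y μ hatT m)) x ∂μ := by
    have hae : ∀ᵐ x ∂μ.restrict D,
        1 ≤ C * ∑ j ∈ Finset.range (K + 1), (hatT^[j] (entrance T Y μ hatT m)) x :=
      ae_restrict_of_ae_restrict_of_subset hDY hA3
    calc μ D = ∫⁻ _ in D, 1 ∂μ := by rw [setLIntegral_one]
      _ ≤ ∫⁻ x in D, (C * ∑ j ∈ Finset.range (K + 1),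
            (hatT^[j] (entrance T Y μ hatT m)) x) ∂μ := lintegral_mono_ae hae
      _ = C * ∑ j ∈ Finset.range (K + 1),
            ∫⁻ x in D, (hatT^[j] (entrance T Y μ hatT m)) x ∂μ := by
          rw [lintegral_const_mul _ (Finset.measurable_sum _ fun j _ => hmeasj j),
            lintegral_finset_sum _ fun j _ => hmeasj j]
  -- step 2 : compute each set integral
  have step2 : ∀ j : ℕ, ∫⁻ x in D, (hatT^[j] (entrance T Y μ hatT m)) x ∂μ
      = (∑ k ∈ Finset.range m, μ (Ypart T Y k ∩ (T^[j + k]) ⁻¹' D)) * (wrate T Y μ m)⁻¹ := by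
    intro j
    rw [lintegral_set_dual hT hatT hatTmeas hatTdual j hem hD]
    have hptw : ∀ x, D.indicator (fun _ => (1:ℝ≥0∞)) (T^[j] x) * entrance T Y μ hatT m x
        = (∑ k ∈ Finset.range m, D.indicator (fun _ => (1:ℝ≥0∞)) (T^[j] x) *
            (hatT^[k] ((Ypart T Y k).indicator fun _ => (1:ℝ≥0∞))) x) * (wrate T Y μ m)⁻¹ := by
      intro x
      rw [entrance, div_eq_mul_inv, ← Finset.mul_sum, mul_assoc]
    rw [lintegral_congr hptw]
    have hDind : Measurable (fun x => D.indicator (fun _ => (1:ℝ≥0∞)) (T^[j] x)) :=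
      (measurable_const.indicator hD).comp (hT.iterate j)
    have hin : ∀ k : ℕ, Measurable (fun x => D.indicator (fun _ => (1:ℝ≥0∞)) (T^[j] x) *
        (hatT^[k] ((Ypart T Y k).indicator fun _ => (1:ℝ≥0∞))) x) :=
      fun k => hDind.mul (hatT_iterate_measurable hatT hatTmeas (hYkmeas k) k)
    have hfm : Measurable (fun x => ∑ k ∈ Finset.range m,
        D.indicator (fun _ => (1:ℝ≥0∞)) (T^[j] x) *
          (hatT^[k] ((Ypart T Y k).indicator fun _ => (1:ℝ≥0∞))) x) :=
      Finset.measurable_sum _ fun k _ => hin k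
    rw [lintegral_mul_const _ hfm]
    congr 1
    rw [lintegral_finset_sum _ fun k _ => hin k]
    apply Finset.sum_congr rfl fun k _ => ?_
    have hdual := dual_iterate hT hatT hatTmeas hatTdual k (hYkmeas k)
      (v := fun x => D.indicator (fun _ => (1:ℝ≥0∞)) (T^[j] x))
      ((measurable_const.indicator hD).comp (hT.iterate j))
    have hcomp : ∀ x, D.indicator (fun _ => (1:ℝ≥0∞)) (T^[j] (T^[k] x))
        = D.indicator (fun _ => (1:ℝ≥0∞)) (T^[j + k] x) := by
      intro x; rw [Function.iterate_add_apply]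
    calc ∫⁻ x, D.indicator (fun _ => (1:ℝ≥0∞)) (T^[j] x) *
            (hatT^[k] ((Ypart T Y k).indicator fun _ => (1:ℝ≥0∞))) x ∂μ
        = ∫⁻ x, D.indicator (fun _ => (1:ℝ≥0∞)) (T^[j] (T^[k] x)) *
            (Ypart T Y k).indicator (fun _ => (1:ℝ≥0∞)) x ∂μ := hdual.symm
      _ = ∫⁻ x, D.indicator (fun _ => (1:ℝ≥0∞)) (T^[j + k] x) *
            (Ypart T Y k).indicator (fun _ => (1:ℝ≥0∞)) x ∂μ := by
          apply lintegral_congr fun x => ?_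
          rw [hcomp]
      _ = μ (Ypart T Y k ∩ (T^[j + k]) ⁻¹' D) :=
          lintegral_ind_comp_ind hT (j + k) hD (measurableSet_Ypart hT hYm k)
  calc μ D ≤ C * ∑ j ∈ Finset.range (K + 1),
        ∫⁻ x in D, (hatT^[j] (entrance T Y μ hatT m)) x ∂μ := step1
    _ = C * (∑ j ∈ Finset.range (K + 1), ∑ k ∈ Finset.range m,
          μ (Ypart T Y k ∩ (T^[j + k]) ⁻¹' D)) * (wrate T Y μ m)⁻¹ := by
        rw [mul_assoc]
        congr 1
        rw [Finset.sum_mul]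
        exact Finset.sum_congr rfl fun j _ => step2 j

/-- The "last entrance" cover: if `x ∈ Y` and the orbit of `T^[j] x` has last visit
time `≤ M` up to `n`, then there is `r ≤ j + M` with `T^[r] x ∈ Y` whose first return
time exceeds `j + n - r`. -/
lemma cover_lemma {X : Type*} {T : X → X} {Y : Set X} {n M j : ℕ} {x : X}
    (hx : x ∈ Y) (hj : lastVisit T Y n (T^[j] x) ≤ M) :
    ∃ r ≤ j + M, T^[r] x ∈ Y ∧
      (((j + n - r : ℕ)) : ℕ∞) < firstReturn T Y (T^[r] x) := by
  set S : Set ℕ := {i | i ≤ j + n ∧ T^[i] x ∈ Y} with hS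
  have h0 : 0 ∈ S := ⟨Nat.zero_le _, by simpa using hx⟩
  have hbdd : BddAbove S := ⟨j + n, fun i hi => hi.1⟩
  have hne : S.Nonempty := ⟨0, h0⟩
  set r := sSup S with hr
  have hrS : r ∈ S := Nat.sSup_mem hne hbdd
  have hrn : r ≤ j + n := hrS.1
  have hmax : ∀ i, i ∈ S → i ≤ r := fun i hi => le_csSup hbdd hi
  refine ⟨r, ?_, hrS.2, ?_⟩
  · -- r ≤ j + M
    by_cases hjr : j ≤ r
    · have hiv : (r - j) ≤ lastVisit T Y n (T^[j] x) := by
        apply le_csSup ⟨n, fun k hk => hk.1⟩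
        constructor
        · omega
        · have : T^[r - j] (T^[j] x) = T^[r] x := by
            rw [← Function.iterate_add_apply]
            congr 1
            omega
          rw [this]; exact hrS.2
      omega
    · omega
  · -- first return beyond j + n - r
    rw [firstReturn_lt_iff]
    intro k h1 hk hY
    have hmem : (r + k) ∈ S := by
      refine ⟨by omega, ?_⟩
      show T^[r + k] x ∈ Y
      rw [add_comm r k, Function.iterate_add_apply]
      exact hY
    have := hmax _ hmem
    omega

lemma main_estimate {X : Type*} [MeasurableSpace X] {μ : Measure X} {T : X → X}
    (hTmp : MeasurePreserving T μ μ) {Y : Set X} (hYm : MeasurableSet Y)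
    (hatT : (X → ℝ≥0∞) → (X → ℝ≥0∞))
    (hatTmeas : ∀ u, Measurable u → Measurable (hatT u))
    (hatTdual : ∀ u v : X → ℝ≥0∞, Measurable u → Measurable v →
      ∫⁻ x, v (T x) * u x ∂μ = ∫⁻ x, v x * hatT u x ∂μ)
    {C : ℝ≥0∞} {K : ℕ} {G : X → ℝ≥0∞} {CG : ℝ≥0∞} {K' : ℕ}
    (hsweep : ∀ᵐ x ∂μ, G x ≤ CG * ∑ j ∈ Finset.range (K' + 1),
      (hatT^[j] (Y.indicator fun _ => (1:ℝ≥0∞))) x)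
    {n M : ℕ} {r : ℝ} (hr0 : 0 ≤ r) (hrM : ⌊r⌋₊ = M)
    (hA3 : ∀ᵐ x ∂μ.restrict Y,
      1 ≤ C * ∑ j ∈ Finset.range (K + 1), (hatT^[j] (entrance T Y μ hatT (M+1))) x)
    (hMn : M ≤ n) (hq : ∀ i, i < n / 2 → i ≤ n - M) (hq1 : 1 ≤ n / 2) :
    ∫⁻ x in {x | (lastVisit T Y n x : ℝ) ≤ r}, G x ∂μ ≤
      (CG * C * (K'+1) * (K+1) * ((2*M + K + K' + 1 : ℕ) : ℝ≥0∞)) *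
        (wrate T Y μ n * (((n/2 : ℕ) : ℝ≥0∞))⁻¹ * (wrate T Y μ (M+1))⁻¹) := by
  have hT : Measurable T := hTmp.measurable
  set A := {x | (lastVisit T Y n x : ℝ) ≤ r} with hA
  have hAm : MeasurableSet A := measurableSet_lastVisit_le hT hYm n r hr0
  set B := Y ∩ {x | ((n - M : ℕ) : ℕ∞) < firstReturn T Y x} with hB
  have hBm : MeasurableSet B := hYm.inter (measurableSet_firstReturn_gt hT hYm (n - M))
  set q := n / 2 with hqdef
  set m := M + 1 with hm
  set Hh := 2*M + K + K' with hHh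
  -- tail estimate
  have tail : (q : ℝ≥0∞) * μ B ≤ wrate T Y μ n := by
    have h1 : ∀ i ∈ Finset.range q, μ B ≤ μ (Y ∩ {x | (i : ℕ∞) < firstReturn T Y x}) := by
      intro i hi
      apply measure_mono
      apply Set.inter_subset_inter_right
      intro x hx
      have hin : i ≤ n - M := hq i (Finset.mem_range.mp hi)
      have hx' : ((n - M : ℕ) : ℕ∞) < firstReturn T Y x := hx
      exact lt_of_le_of_lt (by exact_mod_cast hin) hx'
    calc (q : ℝ≥0∞) * μ B = (Finset.range q).card • μ B := by
          rw [Finset.card_range, nsmul_eq_mul]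
      _ ≤ ∑ i ∈ Finset.range q, μ (Y ∩ {x | (i : ℕ∞) < firstReturn T Y x}) :=
          Finset.card_nsmul_le_sum _ _ _ h1
      _ ≤ wrate T Y μ n := by
          rw [wrate]
          exact Finset.sum_le_sum_of_subset (Finset.range_subset_range.mpr (by omega))
  -- the D sets
  set D : ℕ → ℕ → Set X := fun j s =>
    Y ∩ (T^[s]) ⁻¹' (Y ∩ {x | ((j + n - s : ℕ) : ℕ∞) < firstReturn T Y x}) with hD
  have hDm : ∀ j s, MeasurableSet (D j s) := fun j s =>
    hYm.inter ((hT.iterate s) (hYm.inter (measurableSet_firstReturn_gt hT hYm _)))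
  have hDY : ∀ j s, D j s ⊆ Y := fun j s => Set.inter_subset_left
  have hDB : ∀ j s, s ≤ j + M → D j s ⊆ (T^[s]) ⁻¹' B := by
    intro j s hs x hx
    refine ⟨hx.2.1, ?_⟩
    have h1 : (n - M : ℕ) ≤ (j + n - s : ℕ) := by omega
    have hx' : ((j + n - s : ℕ) : ℕ∞) < firstReturn T Y (T^[s] x) := hx.2.2
    exact lt_of_le_of_lt (by exact_mod_cast h1) hx'
  have hDdisj : ∀ j s s', s < s' → s' ≤ j + n → Disjoint (D j s) (D j s') := by
    intro j s s' hss hs'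
    rw [Set.disjoint_left]
    intro x hx hx'
    have h1 : ((j + n - s : ℕ) : ℕ∞) < firstReturn T Y (T^[s] x) := hx.2.2
    rw [firstReturn_lt_iff] at h1
    have h2 : T^[s' - s] (T^[s] x) ∈ Y := by
      rw [← Function.iterate_add_apply]
      have : s' - s + s = s' := by omega
      rw [this]
      exact hx'.2.1
    exact h1 (s' - s) (by omega) (by omega) h2
  -- cover : Y ∩ T^{-j} A ⊆ union of the D's
  have hcover : ∀ j, Y ∩ (T^[j]) ⁻¹' A ⊆ ⋃ s ∈ Finset.range (j + M + 1), D j s := by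
    intro j x hx
    have hlv : lastVisit T Y n (T^[j] x) ≤ M := by
      have := hx.2
      rw [hA, Set.mem_preimage, Set.mem_setOf_eq] at this
      rw [← hrM]
      exact (Nat.le_floor_iff hr0).mpr this
    obtain ⟨s, hs, hsY, hsfr⟩ := cover_lemma hx.1 hlv
    refine Set.mem_iUnion₂.mpr ⟨s, Finset.mem_range.mpr (by omega), hx.1, hsY, hsfr⟩
  -- counting for fixed j ≤ K', j' ≤ K
  have hcount : ∀ j ≤ K', ∀ j' ≤ K,
      ∑ s ∈ Finset.range (j + M + 1), ∑ k ∈ Finset.range m,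
        μ (Ypart T Y k ∩ (T^[j' + k]) ⁻¹' (D j s)) ≤ ((Hh + 1 : ℕ) : ℝ≥0∞) * μ B := by
    intro j hjK j' hj'K
    set F : ℕ × ℕ → Set X := fun p =>
      Ypart T Y p.1 ∩ (T^[j' + p.1]) ⁻¹' (D j p.2) with hF
    have hsum : ∑ s ∈ Finset.range (j + M + 1), ∑ k ∈ Finset.range m,
        μ (Ypart T Y k ∩ (T^[j' + k]) ⁻¹' (D j s))
        = ∑ p ∈ Finset.range m ×ˢ Finset.range (j + M + 1), μ (F p) := by
      rw [Finset.sum_product]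
      rw [Finset.sum_comm]
    have hFm : ∀ p ∈ Finset.range m ×ˢ Finset.range (j + M + 1), MeasurableSet (F p) :=
      fun p _ => (measurableSet_Ypart hT hYm p.1).inter ((hT.iterate _) (hDm j p.2))
    have hFdisj : (↑(Finset.range m ×ˢ Finset.range (j + M + 1)) : Set (ℕ × ℕ)).PairwiseDisjoint F := by
      intro p hp p' hp' hne
      simp only [Finset.coe_product, Set.mem_prod, Finset.mem_coe, Finset.mem_range] at hp hp'
      by_cases hk : p.1 = p'.1
      · have hs : p.2 ≠ p'.2 := fun h => hne (Prod.ext hk h)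
        rcases Nat.lt_or_ge p.2 p'.2 with h | h
        · have hd := hDdisj j p.2 p'.2 h (by omega)
          exact Set.disjoint_of_subset (Set.inter_subset_right)
            (Set.inter_subset_right) (by
              rw [hk]
              exact Disjoint.preimage _ hd)
        · have h' : p'.2 < p.2 := by omega
          have hd := hDdisj j p'.2 p.2 h' (by omega)
          exact Set.disjoint_of_subset (Set.inter_subset_right)
            (Set.inter_subset_right) (by
              rw [hk]
              exact (Disjoint.preimage _ hd).symm)
      · exact Set.disjoint_of_subset (Set.inter_subset_left) (Set.inter_subset_left)
          (Ypart_disjoint T Y hk)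
    have hFsub : ∀ p ∈ Finset.range m ×ˢ Finset.range (j + M + 1),
        F p ⊆ ⋃ t ∈ Finset.range (Hh + 1), (T^[t]) ⁻¹' B := by
      intro p hp
      simp only [Finset.mem_product, Finset.mem_range] at hp
      have h1 : F p ⊆ (T^[j' + p.1]) ⁻¹' ((T^[p.2]) ⁻¹' B) := by
        refine Set.Subset.trans Set.inter_subset_right (Set.preimage_mono ?_)
        exact hDB j p.2 (by omega)
      have h2 : (T^[j' + p.1]) ⁻¹' ((T^[p.2]) ⁻¹' B) = (T^[p.2 + (j' + p.1)]) ⁻¹' B := by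
        ext x
        simp only [Set.mem_preimage]
        rw [Function.iterate_add_apply T p.2 (j' + p.1) x,
          Function.iterate_add_apply T j' p.1 x]
      refine h1.trans ?_
      rw [h2]
      apply Set.subset_biUnion_of_mem (u := fun t => (T^[t]) ⁻¹' B)
      have : p.2 + (j' + p.1) ≤ Hh := by omega
      exact Finset.mem_range.mpr (by omega)
    calc ∑ s ∈ Finset.range (j + M + 1), ∑ k ∈ Finset.range m,
          μ (Ypart T Y k ∩ (T^[j' + k]) ⁻¹' (D j s))
        = μ (⋃ p ∈ Finset.range m ×ˢ Finset.range (j + M + 1), F p) := by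
          rw [hsum, measure_biUnion_finset hFdisj hFm]
      _ ≤ μ (⋃ t ∈ Finset.range (Hh + 1), (T^[t]) ⁻¹' B) := by
          apply measure_mono
          exact Set.iUnion₂_subset hFsub
      _ ≤ ∑ t ∈ Finset.range (Hh + 1), μ ((T^[t]) ⁻¹' B) := measure_biUnion_finset_le _ _
      _ = ((Hh + 1 : ℕ) : ℝ≥0∞) * μ B := by
          have : ∀ t, μ ((T^[t]) ⁻¹' B) = μ B := fun t =>
            (hTmp.iterate t).measure_preimage hBm.nullMeasurableSet
          simp [this, Finset.sum_const, Finset.card_range, nsmul_eq_mul]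
  -- bound on μ B
  have hmuB : μ B ≤ wrate T Y μ n * (q : ℝ≥0∞)⁻¹ := by
    have hq0 : (q : ℝ≥0∞) ≠ 0 := by
      simp only [ne_eq, Nat.cast_eq_zero]
      omega
    have hqt : (q : ℝ≥0∞) ≠ ⊤ := by simp
    calc μ B = (q : ℝ≥0∞)⁻¹ * ((q : ℝ≥0∞) * μ B) := by
          rw [← mul_assoc, ENNReal.inv_mul_cancel hq0 hqt, one_mul]
      _ ≤ (q : ℝ≥0∞)⁻¹ * wrate T Y μ n := mul_le_mul_right tail _
      _ = wrate T Y μ n * (q : ℝ≥0∞)⁻¹ := mul_comm _ _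
  -- per-j bound
  have perj : ∀ j ∈ Finset.range (K' + 1), μ (Y ∩ (T^[j]) ⁻¹' A) ≤
      C * (((K + 1 : ℕ) : ℝ≥0∞) * (((Hh + 1 : ℕ) : ℝ≥0∞) * μ B)) * (wrate T Y μ m)⁻¹ := by
    intro j hj
    have hjK : j ≤ K' := by
      have := Finset.mem_range.mp hj
      omega
    calc μ (Y ∩ (T^[j]) ⁻¹' A)
        ≤ μ (⋃ s ∈ Finset.range (j + M + 1), D j s) := measure_mono (hcover j)
      _ ≤ ∑ s ∈ Finset.range (j + M + 1), μ (D j s) := measure_biUnion_finset_le _ _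
      _ ≤ ∑ s ∈ Finset.range (j + M + 1), C * (∑ j' ∈ Finset.range (K + 1),
            ∑ k ∈ Finset.range m, μ (Ypart T Y k ∩ (T^[j' + k]) ⁻¹' (D j s))) *
              (wrate T Y μ m)⁻¹ := by
          apply Finset.sum_le_sum fun s _ => ?_
          exact A3_perD hT hYm hatT hatTmeas hatTdual hA3 (hDm j s) (hDY j s)
      _ = C * (∑ j' ∈ Finset.range (K + 1), ∑ s ∈ Finset.range (j + M + 1),
            ∑ k ∈ Finset.range m, μ (Ypart T Y k ∩ (T^[j' + k]) ⁻¹' (D j s))) *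
              (wrate T Y μ m)⁻¹ := by
          rw [← Finset.sum_mul, ← Finset.mul_sum, Finset.sum_comm]
      _ ≤ C * (∑ j' ∈ Finset.range (K + 1), ((Hh + 1 : ℕ) : ℝ≥0∞) * μ B) *
              (wrate T Y μ m)⁻¹ := by
          apply mul_le_mul_left
          apply mul_le_mul_right
          apply Finset.sum_le_sum fun j' hj' => ?_
          exact hcount j hjK j' (by
            have := Finset.mem_range.mp hj'
            omega)
      _ = C * (((K + 1 : ℕ) : ℝ≥0∞) * (((Hh + 1 : ℕ) : ℝ≥0∞) * μ B)) *
              (wrate T Y μ m)⁻¹ := by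
          rw [Finset.sum_const, Finset.card_range, nsmul_eq_mul]
  -- total
  have htotal : ∫⁻ x in A, G x ∂μ ≤ ((K' + 1 : ℕ) : ℝ≥0∞) * (CG *
      (C * (((K + 1 : ℕ) : ℝ≥0∞) * (((Hh + 1 : ℕ) : ℝ≥0∞) * μ B)) * (wrate T Y μ m)⁻¹)) := by
    calc ∫⁻ x in A, G x ∂μ
        ≤ CG * ∑ j ∈ Finset.range (K' + 1), μ (Y ∩ (T^[j]) ⁻¹' A) :=
          sweep_G_bound hT hYm hatT hatTmeas hatTdual hsweep hAm
      _ ≤ CG * ∑ _j ∈ Finset.range (K' + 1),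
            (C * (((K + 1 : ℕ) : ℝ≥0∞) * (((Hh + 1 : ℕ) : ℝ≥0∞) * μ B)) * (wrate T Y μ m)⁻¹) :=
          mul_le_mul_right (Finset.sum_le_sum perj) _
      _ = ((K' + 1 : ℕ) : ℝ≥0∞) * (CG *
            (C * (((K + 1 : ℕ) : ℝ≥0∞) * (((Hh + 1 : ℕ) : ℝ≥0∞) * μ B)) * (wrate T Y μ m)⁻¹)) := by
          rw [Finset.sum_const, Finset.card_range, nsmul_eq_mul]
          ring
  refine htotal.trans ?_
  calc ((K' + 1 : ℕ) : ℝ≥0∞) * (CG *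
        (C * (((K + 1 : ℕ) : ℝ≥0∞) * (((Hh + 1 : ℕ) : ℝ≥0∞) * μ B)) * (wrate T Y μ m)⁻¹))
      ≤ ((K' + 1 : ℕ) : ℝ≥0∞) * (CG *
        (C * (((K + 1 : ℕ) : ℝ≥0∞) * (((Hh + 1 : ℕ) : ℝ≥0∞) * (wrate T Y μ n * (q : ℝ≥0∞)⁻¹))) *
          (wrate T Y μ m)⁻¹)) := by
        apply mul_le_mul_right
        apply mul_le_mul_right
        apply mul_le_mul_left
        apply mul_le_mul_right
        apply mul_le_mul_right
        exact mul_le_mul_right hmuB _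
    _ = (CG * C * (K'+1) * (K+1) * ((2*M + K + K' + 1 : ℕ) : ℝ≥0∞)) *
        (wrate T Y μ n * (((n/2 : ℕ) : ℝ≥0∞))⁻¹ * (wrate T Y μ (M+1))⁻¹) := by
        show _ = (CG * C * (K'+1) * (K+1) * ((2*M + K + K' + 1 : ℕ) : ℝ≥0∞)) *
          (wrate T Y μ n * ((q : ℝ≥0∞))⁻¹ * (wrate T Y μ m)⁻¹)
        rw [show Hh = 2*M + K + K' from rfl]
        push_cast
        ring

/-- Uniform-convergence-type bound for measurable slowly varying functions
(Karamata-lite, via the Steinhaus/measure trick). -/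
lemma sv_ratio_bound (ℓ : ℝ → ℝ) (hℓmeas : Measurable ℓ) (hℓpos : ∀ t, 0 < t → 0 < ℓ t)
    (hℓsv : ∀ lam : ℝ, 0 < lam → Tendsto (fun t => ℓ (lam * t) / ℓ t) atTop (𝓝 1))
    (t s : ℕ → ℝ) (ht1 : ∀ n, 1 ≤ t n) (hts : ∀ n, t n ≤ s n) (hs2 : ∀ n, s n ≤ 2 * t n)
    (htop : Tendsto t atTop atTop) :
    ∀ᶠ n in atTop, ℓ (t n) ≤ Real.exp 2 * ℓ (s n) := by
  set h : ℝ → ℝ := fun x => Real.log (ℓ (Real.exp x)) with hh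
  have hmeash : Measurable h := Real.measurable_log.comp (hℓmeas.comp Real.measurable_exp)
  set x : ℕ → ℝ := fun n => Real.log (t n) with hx
  set y : ℕ → ℝ := fun n => Real.log (s n) with hy
  have htpos : ∀ n, 0 < t n := fun n => lt_of_lt_of_le one_pos (ht1 n)
  have hspos : ∀ n, 0 < s n := fun n => lt_of_lt_of_le one_pos ((ht1 n).trans (hts n))
  have hstop : Tendsto s atTop atTop := tendsto_atTop_mono hts htop
  have hxtop : Tendsto x atTop atTop := Real.tendsto_log_atTop.comp htop
  have hytop : Tendsto y atTop atTop := Real.tendsto_log_atTop.comp hstop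
  set u : ℕ → ℝ := fun n => y n - x n with hu
  have hu0 : ∀ n, 0 ≤ u n := fun n => sub_nonneg.mpr (Real.log_le_log (htpos n) (hts n))
  have hu1 : ∀ n, u n ≤ 1 := by
    intro n
    have h1 : y n ≤ Real.log 2 + x n := by
      have := Real.log_le_log (hspos n) (hs2 n)
      rwa [Real.log_mul (by norm_num) (ne_of_gt (htpos n))] at this
    have h2 : Real.log 2 ≤ 1 := by
      have := Real.log_le_sub_one_of_pos (by norm_num : (0:ℝ) < 2)
      linarith
    simp only [hu]
    linarith
  -- pointwise convergence of h-differences along any sequence tending to infinity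
  have hkey : ∀ (z : ℕ → ℝ) (w : ℕ → ℝ), (∀ n, 0 < w n) → (∀ n, z n = Real.log (w n)) →
      Tendsto w atTop atTop → ∀ v : ℝ,
      Tendsto (fun n => h (z n + v) - h (z n)) atTop (𝓝 0) := by
    intro z w hwpos hzw hwtop v
    have hev : ∀ n, h (z n + v) - h (z n)
        = Real.log (ℓ (Real.exp v * w n) / ℓ (w n)) := by
      intro n
      have hz : Real.exp (z n) = w n := by rw [hzw n, Real.exp_log (hwpos n)]
      have h1 : h (z n + v) = Real.log (ℓ (Real.exp v * w n)) := by
        simp only [hh]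
        rw [Real.exp_add, mul_comm, hz]
      have h2 : h (z n) = Real.log (ℓ (w n)) := by
        simp only [hh]
        rw [hz]
      rw [h1, h2, ← Real.log_div (ne_of_gt (hℓpos _ (mul_pos (Real.exp_pos v) (hwpos n)))) (ne_of_gt (hℓpos _ (hwpos n)))]
    simp only [hev]
    have hratio : Tendsto (fun n => ℓ (Real.exp v * w n) / ℓ (w n)) atTop (𝓝 1) :=
      (hℓsv (Real.exp v) (Real.exp_pos v)).comp hwtop
    have hlog : Tendsto (fun r : ℝ => Real.log r) (𝓝 1) (𝓝 0) := by
      have := (Real.continuousAt_log (one_ne_zero)).tendsto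
      rwa [Real.log_one] at this
    exact hlog.comp hratio
  -- the increasing family of good sets
  set V : ℕ → Set ℝ := fun N => Set.Icc (0:ℝ) 2 ∩
    ⋂ m, {v : ℝ | m ≥ N → (|h (x m + v) - h (x m)| ≤ 1 ∧ |h (y m + v) - h (y m)| ≤ 1)} with hV
  have hVmeas : ∀ N, MeasurableSet (V N) := by
    intro N
    apply measurableSet_Icc.inter
    apply MeasurableSet.iInter fun m => ?_
    have hm1 : Measurable fun v : ℝ => |h (x m + v) - h (x m)| :=
      ((hmeash.comp (measurable_const.add measurable_id)).sub measurable_const).abs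
    have hm2 : Measurable fun v : ℝ => |h (y m + v) - h (y m)| :=
      ((hmeash.comp (measurable_const.add measurable_id)).sub measurable_const).abs
    have : {v : ℝ | m ≥ N → (|h (x m + v) - h (x m)| ≤ 1 ∧ |h (y m + v) - h (y m)| ≤ 1)}
        = if m ≥ N then {v : ℝ | |h (x m + v) - h (x m)| ≤ 1} ∩
            {v : ℝ | |h (y m + v) - h (y m)| ≤ 1} else Set.univ := by
      by_cases hmN : m ≥ N <;> simp [hmN, Set.inter_def]
    rw [this]
    split
    · exact (measurableSet_le hm1 measurable_const).inter (measurableSet_le hm2 measurable_const)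
    · exact MeasurableSet.univ
  have hVmono : Monotone V := by
    intro N N' hNN'
    apply Set.inter_subset_inter_right
    apply Set.iInter_mono fun m => ?_
    intro v hv hm
    exact hv (le_trans hNN' hm)
  have hVunion : ⋃ N, V N = Set.Icc (0:ℝ) 2 := by
    apply Set.Subset.antisymm
    · exact Set.iUnion_subset fun N => Set.inter_subset_left
    · intro v hv
      have h1 : ∀ᶠ m in atTop, |h (x m + v) - h (x m)| ≤ 1 := by
        have := (hkey x t htpos (fun n => rfl) htop v) (Icc_mem_nhds
          (by norm_num : (-1:ℝ) < 0) (by norm_num : (0:ℝ) < 1))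
        filter_upwards [this] with m hm
        exact abs_le.mpr ⟨hm.1, hm.2⟩
      have h2 : ∀ᶠ m in atTop, |h (y m + v) - h (y m)| ≤ 1 := by
        have := (hkey y s hspos (fun n => rfl) hstop v) (Icc_mem_nhds
          (by norm_num : (-1:ℝ) < 0) (by norm_num : (0:ℝ) < 1))
        filter_upwards [this] with m hm
        exact abs_le.mpr ⟨hm.1, hm.2⟩
      obtain ⟨N, hN⟩ := (h1.and h2).exists_forall_of_atTop
      exact Set.mem_iUnion.mpr ⟨N, hv, Set.mem_iInter.mpr fun m hm => hN m hm⟩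
  -- find a level with large measure
  have hvol : Tendsto (fun N => volume (V N)) atTop (𝓝 (volume (⋃ N, V N))) :=
    tendsto_measure_iUnion_atTop hVmono
  have hvol2 : volume (⋃ N, V N) = ENNReal.ofReal 2 := by
    rw [hVunion, Real.volume_Icc]
    norm_num
  have hbig : ∀ᶠ N in atTop, ENNReal.ofReal (3/2) < volume (V N) := by
    rw [hvol2] at hvol
    exact hvol.eventually (eventually_gt_nhds (by
      rw [ENNReal.ofReal_lt_ofReal_iff (by norm_num)]
      norm_num))
  obtain ⟨N₀, hN₀⟩ := hbig.exists
  -- conclusion for m ≥ N₀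
  filter_upwards [eventually_ge_atTop N₀] with m hm
  set Cm : Set ℝ := (fun v => v - u m) ⁻¹' (V N₀) with hCm
  have hCmvol : volume Cm = volume (V N₀) := by
    have : Cm = (fun v => v + (-(u m))) ⁻¹' (V N₀) := by
      ext v; simp [hCm, sub_eq_add_neg]
    rw [this]
    exact measure_preimage_add_right volume (-(u m)) (V N₀)
  have hnd : ¬ Disjoint (V N₀) Cm := by
    intro hdisj
    have hsub : V N₀ ∪ Cm ⊆ Set.Icc (0:ℝ) 3 := by
      intro v hv
      rcases hv with hv | hv
      · exact ⟨hv.1.1, hv.1.2.trans (by norm_num)⟩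
      · have h1 : v - u m ∈ Set.Icc (0:ℝ) 2 := hv.1
        constructor
        · have := hu0 m; have := h1.1; simp at h1 ⊢; linarith [h1.1]
        · have := hu1 m; have := h1.2; simp at h1 ⊢; linarith [h1.2]
    have h2 : volume (V N₀ ∪ Cm) = volume (V N₀) + volume Cm :=
      measure_union hdisj (measurableSet_preimage (measurable_id.sub_const _) (hVmeas N₀))
    have h3 : volume (V N₀ ∪ Cm) ≤ ENNReal.ofReal 3 := by
      have h3' : volume (V N₀ ∪ Cm) ≤ volume (Set.Icc (0:ℝ) 3) := measure_mono hsub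
      rwa [Real.volume_Icc, show (3:ℝ) - 0 = 3 by norm_num] at h3'
    have h4 : ENNReal.ofReal 3 < volume (V N₀) + volume Cm := by
      rw [hCmvol, show (ENNReal.ofReal 3) = ENNReal.ofReal (3/2) + ENNReal.ofReal (3/2) by
        rw [← ENNReal.ofReal_add (by norm_num) (by norm_num)]; norm_num]
      exact ENNReal.add_lt_add hN₀ hN₀
    rw [h2] at h3
    exact absurd h3 (not_le.mpr h4)
  obtain ⟨v, hvV, hvC⟩ := Set.not_disjoint_iff.mp hnd
  have hb1 : |h (x m + v) - h (x m)| ≤ 1 := ((Set.mem_iInter.mp hvV.2 m) hm).1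
  have hb2 : |h (y m + (v - u m)) - h (y m)| ≤ 1 := ((Set.mem_iInter.mp hvC.2 m) hm).2
  have heq : y m + (v - u m) = x m + v := by simp only [hu]; ring
  rw [heq] at hb2
  have hfinal : h (x m) ≤ h (y m) + 2 := by
    have := abs_le.mp hb1
    have := abs_le.mp hb2
    cases abs_le.mp hb1; cases abs_le.mp hb2
    linarith [abs_le.mp hb1, abs_le.mp hb2]
  have hxl : h (x m) = Real.log (ℓ (t m)) := by
    simp only [hh, hx]
    rw [Real.exp_log (htpos m)]
  have hyl : h (y m) = Real.log (ℓ (s m)) := by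
    simp only [hh, hy]
    rw [Real.exp_log (hspos m)]
  have hℓt : ℓ (t m) = Real.exp (h (x m)) := by
    rw [hxl, Real.exp_log (hℓpos _ (htpos m))]
  have hℓs : ℓ (s m) = Real.exp (h (y m)) := by
    rw [hyl, Real.exp_log (hℓpos _ (hspos m))]
  calc ℓ (t m) = Real.exp (h (x m)) := hℓt
    _ ≤ Real.exp (h (y m) + 2) := Real.exp_le_exp.mpr hfinal
    _ = Real.exp 2 * Real.exp (h (y m)) := by rw [Real.exp_add]; ring
    _ = Real.exp 2 * ℓ (s m) := by rw [hℓs]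

lemma wrate_lt_top {X : Type*} [MeasurableSpace X] (T : X → X) (Y : Set X)
    (μ : Measure X) (hY1 : μ Y < ⊤) (n : ℕ) : wrate T Y μ n < ⊤ := by
  rw [wrate]
  apply ENNReal.sum_lt_top.mpr
  intro k _
  exact lt_of_le_of_lt (measure_mono Set.inter_subset_left) hY1

lemma le_wrate {X : Type*} [MeasurableSpace X] (T : X → X) (Y : Set X)
    (μ : Measure X) {n : ℕ} (hn : 1 ≤ n) : μ Y ≤ wrate T Y μ n := by
  rw [wrate]
  have h0 : Y ∩ {x | ((0:ℕ) : ℕ∞) < firstReturn T Y x} = Y := by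
    apply Set.inter_eq_left.mpr
    intro x _
    have := firstReturn_pos T Y x
    simpa using this
  calc μ Y = μ (Y ∩ {x | ((0:ℕ) : ℕ∞) < firstReturn T Y x}) := by rw [h0]
    _ ≤ ∑ k ∈ Finset.range n, μ (Y ∩ {x | ((k:ℕ) : ℕ∞) < firstReturn T Y x}) :=
      Finset.single_le_sum (f := fun k => μ (Y ∩ {x | ((k:ℕ) : ℕ∞) < firstReturn T Y x}))
        (fun k _ => zero_le) (Finset.mem_range.mpr (by omega))


lemma real_chain (α : ℝ) (hα0 : 0 < α) (hα1 : α < 1)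
    (c nn t mm lt ln lm W1 W2 e1 qq : ℝ)
    (hc : 0 < c) (hnn : 4 ≤ nn) (ht : t = c * nn) (ht1 : 1 ≤ t)
    (hmt : t ≤ mm) (hm2 : mm ≤ 2 * t)
    (hlt : 0 < lt) (hln : 0 < ln) (hlm : 0 < lm)
    (hltm : lt ≤ Real.exp 2 * lm)
    (hW1 : W1 ≤ 2 * (nn ^ (1-α) * ln)) (hW1pos : 0 ≤ W1)
    (hW2 : (1/2) * (mm ^ (1-α) * lm) ≤ W2)
    (he1 : e1 ≤ 3 * t) (he1pos : 0 ≤ e1)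
    (hqq : nn / 4 ≤ qq) :
    lt / (c ^ α * ln) * (e1 * (W1 * qq⁻¹ * W2⁻¹)) ≤ 96 * Real.exp 2 := by
  have hE : (0:ℝ) < Real.exp 2 := Real.exp_pos 2
  have hnpos : (0:ℝ) < nn := by linarith
  have htpos : 0 < t := by linarith
  have hmpos : 0 < mm := by linarith
  have hb : 0 < c ^ α * ln := mul_pos (Real.rpow_pos_of_pos hc α) hln
  have hrn : (0:ℝ) < nn ^ (1-α) := Real.rpow_pos_of_pos hnpos _
  have hrm : (0:ℝ) < mm ^ (1-α) := Real.rpow_pos_of_pos hmpos _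
  have hW2pos : 0 < W2 := lt_of_lt_of_le (by positivity) hW2
  have hqqpos : 0 < qq := lt_of_lt_of_le (by linarith) hqq
  -- core comparison
  have core : t * nn ^ (1-α) ≤ c ^ α * nn * mm ^ (1-α) := by
    have h1 : (c*nn) ^ (1-α) ≤ mm ^ (1-α) :=
      Real.rpow_le_rpow (by positivity) (by rw [← ht]; exact hmt) (by linarith)
    have h2 : (c*nn) ^ (1-α) = c ^ (1-α) * nn ^ (1-α) :=
      Real.mul_rpow (le_of_lt hc) (le_of_lt hnpos)
    have h3 : c ^ α * c ^ (1-α) = c := by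
      rw [← Real.rpow_add hc, show α + (1-α) = 1 by ring, Real.rpow_one]
    calc t * nn ^ (1-α) = (c ^ α * c ^ (1-α)) * nn * nn ^ (1-α) := by rw [h3, ht]
      _ = c ^ α * nn * (c ^ (1-α) * nn ^ (1-α)) := by ring
      _ = c ^ α * nn * ((c*nn) ^ (1-α)) := by rw [h2]
      _ ≤ c ^ α * nn * mm ^ (1-α) := by
          apply mul_le_mul_of_nonneg_left h1 (by positivity)
  have key : lt * e1 * W1 ≤ (96 * Real.exp 2) * ((c ^ α * ln) * qq * W2) := by
    have lhs1 : lt * e1 * W1 ≤ (Real.exp 2 * lm) * (3*t) * (2 * (nn ^ (1-α) * ln)) := by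
      apply mul_le_mul (mul_le_mul hltm he1 he1pos (by positivity)) hW1 hW1pos (by positivity)
    have rhs1 : (96 * Real.exp 2) * ((c ^ α * ln) * (nn/4) * ((1/2) * (mm ^ (1-α) * lm)))
        ≤ (96 * Real.exp 2) * ((c ^ α * ln) * qq * W2) := by
      apply mul_le_mul_of_nonneg_left _ (by positivity)
      apply mul_le_mul (mul_le_mul_of_nonneg_left hqq (by positivity)) hW2
        (by positivity) (by positivity)
    refine lhs1.trans (le_trans ?_ rhs1)
    have expand : (96 * Real.exp 2) * ((c ^ α * ln) * (nn/4) * ((1/2) * (mm ^ (1-α) * lm)))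
        = 12 * Real.exp 2 * lm * ln * (c ^ α * nn * mm ^ (1-α)) := by ring
    have expand2 : (Real.exp 2 * lm) * (3*t) * (2 * (nn ^ (1-α) * ln))
        = 6 * Real.exp 2 * lm * ln * (t * nn ^ (1-α)) := by ring
    rw [expand, expand2]
    have h6 : (6:ℝ) * Real.exp 2 * lm * ln ≤ 12 * Real.exp 2 * lm * ln := by nlinarith
    calc 6 * Real.exp 2 * lm * ln * (t * nn ^ (1-α))
        ≤ 6 * Real.exp 2 * lm * ln * (c ^ α * nn * mm ^ (1-α)) := by
          apply mul_le_mul_of_nonneg_left core (by positivity)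
      _ ≤ 12 * Real.exp 2 * lm * ln * (c ^ α * nn * mm ^ (1-α)) := by
          apply mul_le_mul_of_nonneg_right h6 (by positivity)
  have heq : lt / (c ^ α * ln) * (e1 * (W1 * qq⁻¹ * W2⁻¹))
      = (lt * e1 * W1) / ((c ^ α * ln) * qq * W2) := by
    field_simp
  rw [heq]
  exact (div_le_iff₀ (by positivity)).mpr (by linarith [key])

/-- Upper large deviation estimate for `μ_G(Z_n^Y/n ≤ c(n))` without assuming
existence of the asymptotic entrance density. -/
theorem stmt17 {X : Type*} [MeasurableSpace X] {μ : Measure X} [SigmaFinite μ]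
    {T : X → X} (hcons : Conservative T μ) (herg : Ergodic T μ)
    (hinf : μ Set.univ = ⊤) {Y : Set X} (hYm : MeasurableSet Y)
    (hY0 : 0 < μ Y) (hY1 : μ Y < ⊤)
    (hatT : (X → ℝ≥0∞) → (X → ℝ≥0∞))
    (hatTmeas : ∀ u, Measurable u → Measurable (hatT u))
    (hatTdual : ∀ u v : X → ℝ≥0∞, Measurable u → Measurable v →
      ∫⁻ x, v (T x) * u x ∂μ = ∫⁻ x, v x * hatT u x ∂μ)
    (α : ℝ) (hα : α ∈ Set.Ioo (0:ℝ) 1)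
    (ℓ : ℝ → ℝ) (hℓmeas : Measurable ℓ) (hℓpos : ∀ t, 0 < t → 0 < ℓ t)
    (hℓsv : ∀ lam : ℝ, 0 < lam → Tendsto (fun t => ℓ (lam * t) / ℓ t) atTop (𝓝 1))
    -- (A2): `w_n^Y ~ n^{1-α} ℓ(n)`
    (hw : Tendsto (fun n : ℕ => (wrate T Y μ n).toReal / ((n : ℝ) ^ (1 - α) * ℓ n))
      atTop (𝓝 1))
    -- (A3): uniform sweeping of the entrance densities for `1_Y`
    (hA3 : ∃ (N : ℕ) (C : ℝ≥0∞) (K : ℕ), C ≠ ⊤ ∧ ∀ n : ℕ, N ≤ n →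
      ∀ᵐ x ∂μ.restrict Y,
        1 ≤ C * ∑ j ∈ Finset.range (K + 1), (hatT^[j] (entrance T Y μ hatT n)) x)
    (G : X → ℝ≥0∞) (hGmeas : Measurable G) (hGint : ∫⁻ x, G x ∂μ < ⊤)
    -- `1_Y` is uniformly sweeping for `G`
    (hGsweep : ∃ (C : ℝ≥0∞) (K : ℕ), C ≠ ⊤ ∧ ∀ᵐ x ∂μ,
      G x ≤ C * ∑ j ∈ Finset.range (K + 1),
        (hatT^[j] (Y.indicator fun _ => (1:ℝ≥0∞))) x) :
    ∃ C2 : ℝ≥0∞, C2 ≠ ⊤ ∧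
      ∀ c : ℕ → ℝ, (∀ n, 0 < c n) → Tendsto c atTop (𝓝 0) →
        Tendsto (fun n : ℕ => c n * n) atTop atTop →
        Filter.atTop.limsup (fun n : ℕ =>
          ENNReal.ofReal (ℓ (c n * n) / ((c n) ^ α * ℓ n)) *
            ∫⁻ x in {x | (lastVisit T Y n x : ℝ) ≤ c n * n}, G x ∂μ) ≤ C2 := by
  obtain ⟨N, C, K, hCtop, hA3'⟩ := hA3
  obtain ⟨CG, K', hCGtop, hGs⟩ := hGsweep
  have hTmp : MeasurePreserving T μ μ := herg.toMeasurePreserving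
  have hT : Measurable T := hTmp.measurable
  obtain ⟨hα0, hα1⟩ := hα
  refine ⟨CG * C * (K'+1) * (K+1) * ENNReal.ofReal (96 * Real.exp 2), ?_, ?_⟩
  · exact ENNReal.mul_ne_top (ENNReal.mul_ne_top (ENNReal.mul_ne_top (ENNReal.mul_ne_top
      hCGtop hCtop) (by simp)) (by simp)) ENNReal.ofReal_ne_top
  intro c hc0 hcz hct
  set t : ℕ → ℝ := fun n => c n * n with htdef
  set M : ℕ → ℕ := fun n => ⌊t n⌋₊ with hMdef
  set m : ℕ → ℕ := fun n => M n + 1 with hmdef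
  -- eventual bound
  have hev : ∀ᶠ n in atTop,
      ENNReal.ofReal (ℓ (c n * n) / ((c n) ^ α * ℓ n)) *
          ∫⁻ x in {x | (lastVisit T Y n x : ℝ) ≤ c n * n}, G x ∂μ ≤
        CG * C * (K'+1) * (K+1) * ENNReal.ofReal (96 * Real.exp 2) := by
    have hmtop : Tendsto m atTop atTop :=
      tendsto_atTop_mono (fun n => Nat.le_succ _) (tendsto_nat_floor_atTop.comp hct)
    -- slowly varying comparison between ℓ(t n) and ℓ(m n)
    set t' : ℕ → ℝ := fun n => max (t n) 1 with ht'def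
    set s' : ℕ → ℝ := fun n => min (max ((m n : ℝ)) (t' n)) (2 * t' n) with hs'def
    have ht1' : ∀ n, 1 ≤ t' n := fun n => le_max_right _ _
    have hts' : ∀ n, t' n ≤ s' n := fun n => le_min (le_max_right _ _) (by
      have := ht1' n; linarith)
    have hs2' : ∀ n, s' n ≤ 2 * t' n := fun n => min_le_right _ _
    have htop' : Tendsto t' atTop atTop :=
      tendsto_atTop_mono (fun n => le_max_left _ _) hct
    have hsv := sv_ratio_bound ℓ hℓmeas hℓpos hℓsv t' s' ht1' hts' hs2' htop'
    have E1 : ∀ᶠ n in atTop, (2:ℝ) ≤ t n := hct.eventually_ge_atTop 2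
    have E2 : ∀ᶠ n in atTop, (N:ℝ) ≤ t n := hct.eventually_ge_atTop (N:ℝ)
    have E3 : ∀ᶠ n in atTop, (K + K' + 1 : ℝ) ≤ t n := hct.eventually_ge_atTop _
    have E4 : ∀ᶠ n in atTop, c n < 1/8 :=
      hcz.eventually (eventually_lt_nhds (by norm_num))
    have E5 : ∀ᶠ n in atTop, 4 ≤ n := eventually_ge_atTop 4
    have E6 : ∀ᶠ n in atTop,
        (wrate T Y μ n).toReal / ((n : ℝ) ^ (1 - α) * ℓ n) < 2 :=
      hw.eventually (eventually_lt_nhds one_lt_two)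
    have E7 : ∀ᶠ n in atTop, (1/2 : ℝ) <
        (wrate T Y μ (m n)).toReal / ((m n : ℝ) ^ (1 - α) * ℓ (m n)) :=
      (hw.comp hmtop).eventually (eventually_gt_nhds (by norm_num))
    filter_upwards [E1, E2, E3, E4, E5, E6, E7, hsv] with n h1 h2 h3 h4 h5 h6 h7 h8
    -- basic positivity and size facts
    have hcpos : 0 < c n := hc0 n
    have hnR : (4:ℝ) ≤ (n:ℝ) := by exact_mod_cast h5
    have hnpos : (0:ℝ) < (n:ℝ) := by linarith
    have htpos : 0 < t n := by linarith
    have ht1n : 1 ≤ t n := by linarith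
    have hMt : (M n : ℝ) ≤ t n := Nat.floor_le (le_of_lt htpos)
    have htm : t n < (m n : ℝ) := by
      have := Nat.lt_floor_add_one (t n)
      push_cast [hmdef]
      exact_mod_cast this
    have ht8 : t n ≤ 1/8 * (n:ℝ) := by
      rw [htdef]
      exact mul_le_mul_of_nonneg_right (le_of_lt h4) (Nat.cast_nonneg n)
    have hMn8 : 8 * M n ≤ n := by
      have : (8 * M n : ℝ) ≤ (n : ℝ) := by push_cast; linarith
      exact_mod_cast this
    have hMn : M n ≤ n := by omega
    have hqcond : ∀ i, i < n / 2 → i ≤ n - M n := by omega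
    have hq1 : 1 ≤ n / 2 := by omega
    have hNm : N ≤ m n := by
      have : (N:ℝ) < (m n : ℝ) := lt_of_le_of_lt h2 htm
      exact_mod_cast le_of_lt this
    -- identify the slowly-varying bound
    have ht'n : t' n = t n := max_eq_left ht1n
    have hs'n : s' n = (m n : ℝ) := by
      have ha : max ((m n:ℝ)) (t' n) = (m n:ℝ) := max_eq_left (by
        rw [ht'n]; exact le_of_lt htm)
      have hb : (m n : ℝ) ≤ 2 * t' n := by
        rw [ht'n, hmdef]
        push_cast
        linarith
      rw [hs'def]
      simp only
      rw [ha]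
      exact min_eq_left hb
    have hℓtm : ℓ (t n) ≤ Real.exp 2 * ℓ ((m n : ℝ)) := by
      rw [← ht'n, ← hs'n]
      exact h8
    -- the dynamical estimate
    have hInt := main_estimate hTmp hYm hatT hatTmeas hatTdual hGs
      (mul_nonneg (le_of_lt hcpos) (Nat.cast_nonneg n)) rfl
      (hA3' (m n) hNm) hMn hqcond hq1
    -- the analytic estimate
    have hwn_ne : wrate T Y μ n ≠ ⊤ := (wrate_lt_top T Y μ hY1 n).ne
    have hwm_ne : wrate T Y μ (M n + 1) ≠ ⊤ := (wrate_lt_top T Y μ hY1 _).ne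
    have hwm_pos : 0 < wrate T Y μ (M n + 1) :=
      lt_of_lt_of_le hY0 (le_wrate T Y μ (by omega))
    have hq0 : ((n/2 : ℕ) : ℝ≥0∞) ≠ 0 := by
      simp only [ne_eq, Nat.cast_eq_zero]
      omega
    have hρ0 : 0 ≤ ℓ (c n * n) / ((c n) ^ α * ℓ n) := by
      apply div_nonneg (le_of_lt (hℓpos _ htpos))
      exact le_of_lt (mul_pos (Real.rpow_pos_of_pos hcpos α) (hℓpos _ hnpos))
    set P : ℝ≥0∞ := ENNReal.ofReal (ℓ (c n * n) / ((c n) ^ α * ℓ n)) *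
      (((2*(M n) + K + K' + 1 : ℕ) : ℝ≥0∞) *
        (wrate T Y μ n * (((n/2 : ℕ) : ℝ≥0∞))⁻¹ * (wrate T Y μ (M n + 1))⁻¹)) with hPdef
    have hPne : P ≠ ⊤ := by
      rw [hPdef]
      apply ENNReal.mul_ne_top ENNReal.ofReal_ne_top
      apply ENNReal.mul_ne_top (ENNReal.natCast_ne_top _)
      apply ENNReal.mul_ne_top (ENNReal.mul_ne_top hwn_ne (ENNReal.inv_ne_top.mpr hq0))
      exact ENNReal.inv_ne_top.mpr (ne_of_gt hwm_pos)
    have hPle : P ≤ ENNReal.ofReal (96 * Real.exp 2) := by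
      rw [← ENNReal.ofReal_toReal hPne]
      apply ENNReal.ofReal_le_ofReal
      rw [hPdef]
      rw [ENNReal.toReal_mul, ENNReal.toReal_mul, ENNReal.toReal_mul, ENNReal.toReal_mul,
        ENNReal.toReal_inv, ENNReal.toReal_inv, ENNReal.toReal_ofReal hρ0,
        ENNReal.toReal_natCast, ENNReal.toReal_natCast]
      -- real-variable bounds
      have hW1 : (wrate T Y μ n).toReal ≤ 2 * ((n : ℝ) ^ (1 - α) * ℓ n) := by
        have hd : (0:ℝ) < (n : ℝ) ^ (1 - α) * ℓ n :=
          mul_pos (Real.rpow_pos_of_pos hnpos _) (hℓpos _ hnpos)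
        exact le_of_lt ((div_lt_iff₀ hd).mp h6)
      have hmpos : (0:ℝ) < (m n : ℝ) := by positivity
      have hW2 : (1/2 : ℝ) * ((m n : ℝ) ^ (1 - α) * ℓ (m n)) ≤
          (wrate T Y μ (m n)).toReal := by
        have hd : (0:ℝ) < (m n : ℝ) ^ (1 - α) * ℓ (m n) :=
          mul_pos (Real.rpow_pos_of_pos (by linarith) _) (hℓpos _ (by linarith))
        have := (lt_div_iff₀ hd).mp h7
        linarith
      have he1 : ((2*(M n) + K + K' + 1 : ℕ) : ℝ) ≤ 3 * t n := by
        push_cast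
        linarith
      have hqq : (n:ℝ) / 4 ≤ ((n/2 : ℕ) : ℝ) := by
        have : n ≤ 4 * (n/2) := by omega
        have h' : (n:ℝ) ≤ 4 * ((n/2 : ℕ) : ℝ) := by exact_mod_cast this
        linarith
      have := real_chain α hα0 hα1 (c n) (n:ℝ) (t n) ((m n):ℝ)
        (ℓ (t n)) (ℓ (n:ℝ)) (ℓ ((m n):ℝ))
        ((wrate T Y μ n).toReal) ((wrate T Y μ (m n)).toReal)
        (((2*(M n) + K + K' + 1 : ℕ)) : ℝ) (((n/2 : ℕ)) : ℝ)
        hcpos hnR rfl ht1n (le_of_lt htm) (by rw [hmdef]; push_cast; linarith)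
        (hℓpos _ htpos) (hℓpos _ hnpos) (hℓpos _ hmpos)
        hℓtm hW1 ENNReal.toReal_nonneg hW2 he1 (by positivity) hqq
      calc ℓ (c n * n) / ((c n) ^ α * ℓ n) *
            (((2*(M n) + K + K' + 1 : ℕ) : ℝ) * ((wrate T Y μ n).toReal *
              (((n/2 : ℕ) : ℝ))⁻¹ * ((wrate T Y μ (M n + 1)).toReal)⁻¹))
          = ℓ (t n) / ((c n) ^ α * ℓ n) *
            ((((2*(M n) + K + K' + 1 : ℕ)) : ℝ) * ((wrate T Y μ n).toReal *
              (((n/2 : ℕ) : ℝ))⁻¹ * ((wrate T Y μ (m n)).toReal)⁻¹)) := by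
            rw [htdef, hmdef]
        _ ≤ 96 * Real.exp 2 := by
            rw [show ℓ (t n) / ((c n) ^ α * ℓ n) *
              ((((2*(M n) + K + K' + 1 : ℕ)) : ℝ) * ((wrate T Y μ n).toReal *
                (((n/2 : ℕ) : ℝ))⁻¹ * ((wrate T Y μ (m n)).toReal)⁻¹)) =
              ℓ (t n) / ((c n) ^ α * ℓ (n:ℝ)) *
              ((((2*(M n) + K + K' + 1 : ℕ)) : ℝ) * ((wrate T Y μ n).toReal *
                (((n/2 : ℕ) : ℝ))⁻¹ * ((wrate T Y μ (m n)).toReal)⁻¹)) from rfl]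
            exact this
    -- put everything together
    calc ENNReal.ofReal (ℓ (c n * n) / ((c n) ^ α * ℓ n)) *
          ∫⁻ x in {x | (lastVisit T Y n x : ℝ) ≤ c n * n}, G x ∂μ
        ≤ ENNReal.ofReal (ℓ (c n * n) / ((c n) ^ α * ℓ n)) *
          ((CG * C * (K'+1) * (K+1) * ((2*(M n) + K + K' + 1 : ℕ) : ℝ≥0∞)) *
            (wrate T Y μ n * (((n/2 : ℕ) : ℝ≥0∞))⁻¹ * (wrate T Y μ (M n + 1))⁻¹)) :=
          mul_le_mul_right hInt _
      _ = (CG * C * (K'+1) * (K+1)) * P := by rw [hPdef]; ring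
      _ ≤ (CG * C * (K'+1) * (K+1)) * ENNReal.ofReal (96 * Real.exp 2) :=
          mul_le_mul_right hPle _
      _ = CG * C * (K'+1) * (K+1) * ENNReal.ofReal (96 * Real.exp 2) := by ring

  exact Filter.limsup_le_of_le (by isBoundedDefault) hev
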